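/- If a(s)/s^k → a_∞ as s → +∞ for constants k > 0 and a_∞ > 0, then g(s)/s^{2/(k+2)} → g_∞ as s → +∞, where g_∞ = ((k+2)/(2√a_∞))^{2/(k+2)}, and consequently g⁻¹(t)/t^{(k+2)/2} → g_∞^{-(k+2)/2} as t → +∞. -/

import Mathlib

open Filter Topology

lemma tendsto_div_self_of_hasDerivAt (f f' : ℝ → ℝ)
    (hf : ∀ x, HasDerivAt f (f' x) x) {c : ℝ}
    (h : Tendsto f' atTop (𝓝 c)) : Tendsto (fun x => f x / x) atTop (𝓝 c) := by
  rw [Metric.tendsto_atTop] at h ⊢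
  intro ε hε
  obtain ⟨N0, hN0⟩ := h (ε / 2) (by linarith)
  set N := max N0 0 with hNdef
  have hN : ∀ n ≥ N, dist (f' n) c < ε / 2 := fun n hn => hN0 n (le_trans (le_max_left _ _) hn)
  have hNpos : 0 ≤ N := le_max_right _ _
  set A := |f N - c * N| with hA
  have hA0 : 0 ≤ A := abs_nonneg _
  refine ⟨max (N + 1) (1 + (2 / ε) * A), fun x hx => ?_⟩
  have hxN : N < x := lt_of_lt_of_le (by linarith [le_max_left (N+1) (1 + (2/ε) * A)]) hx
  have hx0 : 0 < x := lt_of_le_of_lt hNpos hxN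
  obtain ⟨y, hy, hslope⟩ := exists_hasDerivAt_eq_slope f f' hxN
    (fun z _ => (hf z).continuousAt.continuousWithinAt) (fun z _ => hf z)
  have hyN : dist (f' y) c < ε / 2 := hN y (le_of_lt hy.1)
  have hfx : f x = f N + f' y * (x - N) := by
    field_simp [sub_ne_zero.mpr (ne_of_gt hxN)] at hslope
    linarith [hslope]
  rw [Real.dist_eq] at hyN ⊢
  have key : f x / x - c = (f N - c * N) / x + (f' y - c) * ((x - N) / x) := by
    rw [hfx]; field_simp; ring
  rw [key]
  have hx2 : 1 + (2 / ε) * A ≤ x := le_trans (le_max_right _ _) hx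
  have h1 : |(f N - c * N) / x| < ε / 2 := by
    rw [abs_div, abs_of_pos hx0, div_lt_iff₀ hx0, ← hA]
    have e1 : (ε/2) * (2/ε * A) = A := by field_simp
    nlinarith [mul_le_mul_of_nonneg_left hx2 (le_of_lt (half_pos hε))]
  have h2 : |(f' y - c) * ((x - N) / x)| ≤ ε / 2 := by
    rw [abs_mul]
    have hfrac : |(x - N) / x| ≤ 1 := by
      rw [abs_div, abs_of_pos hx0, div_le_one hx0, abs_of_pos (by linarith : (0:ℝ) < x - N)]
      linarith
    calc |f' y - c| * |(x - N)/x| ≤ (ε/2) * 1 :=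
            mul_le_mul (le_of_lt hyN) hfrac (abs_nonneg _) (by linarith)
      _ = ε / 2 := by ring
  calc |(f N - c * N)/x + (f' y - c) * ((x-N)/x)| ≤ |(f N - c * N)/x| + |(f' y - c) * ((x-N)/x)| := abs_add_le _ _
    _ < ε := by linarith

theorem stmt_2 (a g ginv : ℝ → ℝ) (ha : ContDiff ℝ 1 a) (ν : ℝ) (hν : 0 < ν)
    (hab : ∀ s, ν ≤ a s)
    (hg : ∀ s, HasDerivAt g (1 / Real.sqrt (a (g s))) s) (hg0 : g 0 = 0)
    (hmono : StrictMono g)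
    (hinv1 : ∀ s, ginv (g s) = s) (hinv2 : ∀ t, g (ginv t) = t)
    (k aInf : ℝ) (hk : 0 < k) (haInf : 0 < aInf)
    (haAsym : Tendsto (fun s => a s / s ^ k) atTop (𝓝 aInf)) :
    Tendsto (fun s => g s / s ^ (2 / (k + 2))) atTop
      (𝓝 (((k + 2) / (2 * Real.sqrt aInf)) ^ (2 / (k + 2)))) ∧
    Tendsto (fun t => ginv t / t ^ ((k + 2) / 2)) atTop
      (𝓝 ((((k + 2) / (2 * Real.sqrt aInf)) ^ (2 / (k + 2))) ^ (-((k + 2) / 2)))) := by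
  have hgmono : Monotone g := hmono.monotone
  have hsqrt_pos : ∀ x : ℝ, 0 < Real.sqrt (a x) :=
    fun x => Real.sqrt_pos.mpr (lt_of_lt_of_le hν (hab x))
  have hsqrtInf : 0 < Real.sqrt aInf := Real.sqrt_pos.mpr haInf
  -- Step 1 : g → ∞
  have gtop : Tendsto g atTop atTop := by
    by_cases hbdd : BddAbove (Set.range g)
    · exfalso
      have hgl : Tendsto g atTop (𝓝 (⨆ i, g i)) := tendsto_atTop_ciSup hgmono hbdd
      set l := ⨆ i, g i with hl
      have hal : Tendsto (fun s => a (g s)) atTop (𝓝 (a l)) :=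
        (ha.continuous.tendsto l).comp hgl
      have hsq : Tendsto (fun s => 1 / Real.sqrt (a (g s))) atTop (𝓝 (1 / Real.sqrt (a l))) :=
        tendsto_const_nhds.div ((Real.continuous_sqrt.tendsto _).comp hal)
          (ne_of_gt (hsqrt_pos l))
      have hslope := tendsto_div_self_of_hasDerivAt g _ hg hsq
      set c := 1 / Real.sqrt (a l) with hc
      have hcpos : 0 < c := by rw [hc]; exact one_div_pos.mpr (hsqrt_pos l)
      have hev : ∀ᶠ x in atTop, c / 2 < g x / x :=
        hslope.eventually (eventually_gt_nhds (by linarith))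
      obtain ⟨x, hx1, hx2⟩ :=
        ((hev.and (eventually_ge_atTop (max 1 (2 * (|l| + 1) / c)))).exists)
      obtain ⟨hx1, hx2⟩ := And.intro hx1 hx2
      have hxpos : (0:ℝ) < x := lt_of_lt_of_le one_pos (le_trans (le_max_left _ _) hx2)
      have hgx : g x ≤ l := le_ciSup hbdd x
      have hxge : 2 * (|l| + 1) / c ≤ x := le_trans (le_max_right _ _) hx2
      have hcx : c / 2 * x < g x := by
        rw [lt_div_iff₀ hxpos] at hx1; linarith
      have h2 : c / 2 * (2 * (|l| + 1) / c) ≤ c / 2 * x :=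
        mul_le_mul_of_nonneg_left hxge (by linarith)
      have h3 : c / 2 * (2 * (|l| + 1) / c) = |l| + 1 := by field_simp
      have h4 : |l| + 1 < g x := by rw [← h3] at *; linarith
      have h5 : l < g x := lt_of_le_of_lt (le_abs_self l) (by linarith)
      linarith
    · exact tendsto_atTop_atTop_of_monotone' hgmono hbdd
  have hgev : ∀ᶠ s in atTop, 0 < g s := gtop.eventually_gt_atTop 0
  -- Step 2
  set p : ℝ := (k + 2) / 2 with hp
  have hp1 : (1:ℝ) ≤ p := by rw [hp]; linarith
  have hpm1 : p - 1 = k / 2 := by rw [hp]; ring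
  have hag : Tendsto (fun s => a (g s) / (g s) ^ k) atTop (𝓝 aInf) := haAsym.comp gtop
  have hsqrt_ratio : Tendsto (fun s => Real.sqrt (a (g s)) / (g s) ^ (k / 2)) atTop
      (𝓝 (Real.sqrt aInf)) := by
    have h1 : Tendsto (fun s => Real.sqrt (a (g s) / (g s) ^ k)) atTop
        (𝓝 (Real.sqrt aInf)) := (Real.continuous_sqrt.tendsto _).comp hag
    refine h1.congr' ?_
    filter_upwards [hgev] with s hs
    rw [Real.sqrt_div (le_of_lt (lt_of_lt_of_le hν (hab (g s)))),
        Real.sqrt_eq_rpow ((g s) ^ k), ← Real.rpow_mul hs.le]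
    congr 2
    ring
  have hratio2 : Tendsto (fun s => (g s) ^ (k / 2) / Real.sqrt (a (g s))) atTop
      (𝓝 (Real.sqrt aInf)⁻¹) := by
    have := hsqrt_ratio.inv₀ (ne_of_gt hsqrtInf)
    refine this.congr (fun s => ?_)
    rw [inv_div]
  -- derivative of s ↦ (g s)^p
  have hhd : ∀ s, HasDerivAt (fun s => (g s) ^ p)
      (p * (g s) ^ (p - 1) * (1 / Real.sqrt (a (g s)))) s := by
    intro s
    exact (Real.hasDerivAt_rpow_const (Or.inr hp1)).comp s (hg s)
  have hderiv_tendsto : Tendsto (fun s => p * (g s) ^ (p - 1) * (1 / Real.sqrt (a (g s))))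
      atTop (𝓝 ((k + 2) / (2 * Real.sqrt aInf))) := by
    have h1 : Tendsto (fun s => p * ((g s) ^ (k / 2) / Real.sqrt (a (g s)))) atTop
        (𝓝 (p * (Real.sqrt aInf)⁻¹)) := hratio2.const_mul p
    have h2 : p * (Real.sqrt aInf)⁻¹ = (k + 2) / (2 * Real.sqrt aInf) := by
      rw [hp]; field_simp
    rw [← h2]
    refine h1.congr (fun s => ?_)
    rw [hpm1]; ring
  set c : ℝ := (k + 2) / (2 * Real.sqrt aInf) with hc
  have hcpos : 0 < c := by rw [hc]; positivity
  have htop : Tendsto (fun s => (g s) ^ p / s) atTop (𝓝 c) :=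
    tendsto_div_self_of_hasDerivAt _ _ hhd hderiv_tendsto
  -- Step 3 : first statement
  set q : ℝ := 2 / (k + 2) with hq
  have hpq : p * q = 1 := by rw [hp, hq]; field_simp
  have first : Tendsto (fun s => g s / s ^ q) atTop (𝓝 (c ^ q)) := by
    have h1 : Tendsto (fun s => ((g s) ^ p / s) ^ q) atTop (𝓝 (c ^ q)) :=
      (Real.continuousAt_rpow_const c q (Or.inl (ne_of_gt hcpos))).tendsto.comp htop
    refine h1.congr' ?_
    filter_upwards [hgev, eventually_gt_atTop (0:ℝ)] with s hgs hs
    rw [Real.div_rpow (Real.rpow_nonneg hgs.le p) hs.le, ← Real.rpow_mul hgs.le, hpq,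
        Real.rpow_one]
  refine ⟨first, ?_⟩
  -- Step 4 : inverse statement
  have hL : 0 < c ^ q := Real.rpow_pos_of_pos hcpos q
  have ginvtop : Tendsto ginv atTop atTop := by
    rw [tendsto_atTop_atTop]
    intro M
    refine ⟨g M, fun t ht => ?_⟩
    by_contra hcon
    push_neg at hcon
    have := hmono hcon
    rw [hinv2] at this
    linarith
  have hginv_ev : ∀ᶠ t in atTop, 0 < ginv t := ginvtop.eventually_gt_atTop 0
  have hcomp : Tendsto (fun t => t / (ginv t) ^ q) atTop (𝓝 (c ^ q)) := by
    have := first.comp ginvtop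
    refine this.congr (fun t => ?_)
    simp only [Function.comp_apply, hinv2]
  have hinv_t : Tendsto (fun t => (ginv t) ^ q / t) atTop (𝓝 ((c ^ q)⁻¹)) := by
    have := hcomp.inv₀ (ne_of_gt hL)
    refine this.congr (fun t => ?_)
    rw [inv_div]
  have hqp : q * p = 1 := by rw [mul_comm]; exact hpq
  have h1 : Tendsto (fun t => ((ginv t) ^ q / t) ^ p) atTop (𝓝 (((c ^ q)⁻¹) ^ p)) :=
    (Real.continuousAt_rpow_const _ p (Or.inl (ne_of_gt (inv_pos.mpr hL)))).tendsto.comp hinv_t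
  have h2 : ((c ^ q)⁻¹ : ℝ) ^ p = (c ^ q) ^ (-p) := by
    rw [Real.rpow_neg hL.le, Real.inv_rpow hL.le]
  rw [h2] at h1
  refine h1.congr' ?_
  filter_upwards [hginv_ev, eventually_gt_atTop (0:ℝ)] with t hgt ht
  rw [Real.div_rpow (Real.rpow_nonneg hgt.le q) ht.le, ← Real.rpow_mul hgt.le, hqp,
      Real.rpow_one]
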